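/- arXiv:math/0412054 — 2 statements merged into one kernel-verified Lean document; each statement's English description precedes it below -/
import Mathlib

section
/- For every nonnegative integer n, the following identity of polynomials holds in ℚ[x]: Σ_{k=0}^n S(n,k) x^k = Σ_{i=0}^n (x)_i · B_{n,i}, where (x)_i = x(x−1)⋯(x−i+1) is the falling factorial, S(n,k) are the Stirling numbers of the second kind, and B_{n,i} are the partial Bell polynomials evaluated at the sequence of Bell numbers (B_1, B_2, …, B_{n−i+1}). -/
open Finset Polynomial

/-- Exponential generating function of a sequence. -/
noncomputable def egf {R : Type*} [CommRing R] [Algebra ℚ R] (a : ℕ → R) : PowerSeries R :=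
  PowerSeries.mk fun n => ((n.factorial : ℚ)⁻¹) • a n

/-- Formal composition of power series (the correct composition when the inner
series `h` has zero constant term, since then `h ^ n` has order at least `n`). -/
noncomputable def psComp {R : Type*} [CommRing R] (g h : PowerSeries R) : PowerSeries R :=
  PowerSeries.mk fun m =>
    ∑ n ∈ Finset.range (m + 1), (PowerSeries.coeff (R := R) n g) * (PowerSeries.coeff (R := R) m (h ^ n))

/-- Partial Bell polynomials of a sequence `a` (with `a 0 = 1`):
`B_{n,k} = (n!/k!) · [t^n] (f(t) - 1)^k` where `f` is the e.g.f. of `a`. -/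
noncomputable def bellPartial {R : Type*} [CommRing R] [Algebra ℚ R] (a : ℕ → R) (n k : ℕ) : R :=
  ((n.factorial : ℚ) / (k.factorial : ℚ)) • (PowerSeries.coeff (R := R) n ((egf a - 1) ^ k))

/-- Stirling numbers of the second kind. -/
def stirling2 : ℕ → ℕ → ℕ
  | 0, 0 => 1
  | 0, _ + 1 => 0
  | _ + 1, 0 => 0
  | n + 1, k + 1 => (k + 1) * stirling2 n (k + 1) + stirling2 n k

/-- Bell numbers. -/
def bellNum (n : ℕ) : ℕ := ∑ k ∈ Finset.range (n + 1), stirling2 n k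

/-- Signed Stirling numbers of the first kind, defined as the coefficients of the
falling factorial `x (x-1) ⋯ (x-n+1) = Σ_k s(n,k) x^k`. -/
noncomputable def stirling1 (n k : ℕ) : ℚ := (descPochhammer ℚ n).coeff k

lemma stirling2_eq_zero : ∀ {n k : ℕ}, n < k → stirling2 n k = 0 := by
  intro n
  induction n with
  | zero => intro k h; match k, h with | (k+1), _ => rfl
  | succ n ih =>
    intro k h
    match k, h with
    | (k+1), h =>
      show (k + 1) * stirling2 n (k + 1) + stirling2 n k = 0
      rw [ih (by omega), ih (by omega)]
      simp

lemma stirling2_succ_succ (n k : ℕ) :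
    stirling2 (n+1) (k+1) = ∑ j ∈ Finset.range (n+1), n.choose j * stirling2 j k := by
  induction n generalizing k with
  | zero =>
    show (k + 1) * stirling2 0 (k + 1) + stirling2 0 k = _
    rw [stirling2_eq_zero (by omega)]
    simp
  | succ n ih =>
    rw [Finset.sum_range_succ' (fun j => (n+1).choose j * stirling2 j k)]
    simp only [Nat.choose_succ_succ, add_mul]
    rw [Finset.sum_add_distrib]
    simp only [Nat.succ_eq_add_one]
    have h2 : ∑ i ∈ Finset.range (n+1), n.choose (i+1) * stirling2 (i+1) k
        + (n+1).choose 0 * stirling2 0 k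
        = ∑ j ∈ Finset.range (n+2), n.choose j * stirling2 j k := by
      rw [Finset.sum_range_succ' (fun j => n.choose j * stirling2 j k)]
      simp
    conv_rhs => rw [add_assoc]
    rw [h2, Finset.sum_range_succ (fun j => n.choose j * stirling2 j k) (n+1),
      Nat.choose_succ_self, zero_mul, add_zero, ← ih k]
    cases k with
    | zero =>
      have h0 : ∀ i, stirling2 (i+1) 0 = 0 := fun i => rfl
      simp only [h0, mul_zero, Finset.sum_const_zero, add_zero, zero_add]
      show (0+1) * stirling2 (n+1) (0+1) + stirling2 (n+1) 0 = stirling2 (n+1) (0+1)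
      rw [h0 n]
      ring
    | succ k =>
      have hs : ∀ i, stirling2 (i+1) (k+1) = (k+1) * stirling2 i (k+1) + stirling2 i k :=
        fun i => rfl
      simp only [hs, mul_add, Finset.sum_add_distrib]
      have e1 : ∑ x ∈ Finset.range (n+1), n.choose x * ((k+1) * stirling2 x (k+1))
          = (k+1) * ∑ x ∈ Finset.range (n+1), n.choose x * stirling2 x (k+1) := by
        rw [Finset.mul_sum]; exact Finset.sum_congr rfl fun x _ => by ring
      rw [e1, ← ih, ← ih]
      show (k+1+1) * stirling2 (n+1) (k+1+1) + stirling2 (n+1) (k+1) = _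
      ring

lemma bellNum_succ (n : ℕ) :
    bellNum (n+1) = ∑ j ∈ Finset.range (n+1), n.choose j * bellNum j := by
  have hb : ∀ j ∈ Finset.range (n+1), n.choose j * bellNum j
      = n.choose j * ∑ k ∈ Finset.range (n+1), stirling2 j k := by
    intro j hj
    simp only [Finset.mem_range] at hj
    congr 1
    rw [bellNum]
    apply Finset.sum_subset
    · intro x hx; simp only [Finset.mem_range] at *; omega
    · intro x _ hx
      simp only [Finset.mem_range, not_lt] at hx
      exact stirling2_eq_zero (by omega)
  rw [Finset.sum_congr rfl hb, bellNum,
    Finset.sum_range_succ' (fun k => stirling2 (n+1) k)]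
  simp only [stirling2_succ_succ]
  rw [show stirling2 (n+1) 0 = 0 from rfl, add_zero, Finset.sum_comm]
  simp [Finset.mul_sum]

noncomputable def fB : PowerSeries ℚ := egf (fun m => (bellNum m : ℚ))
noncomputable def gB : PowerSeries ℚ := fB - 1

lemma coeff_fB (m : ℕ) : PowerSeries.coeff (R := ℚ) m fB = (bellNum m : ℚ) / m.factorial := by
  simp [fB, egf, smul_eq_mul, div_eq_inv_mul]

lemma constantCoeff_gB : PowerSeries.constantCoeff (R := ℚ) gB = 0 := by
  have h := coeff_fB 0
  rw [PowerSeries.coeff_zero_eq_constantCoeff] at h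
  simp [gB, h, show bellNum 0 = 1 from rfl]

lemma coeff_gB_pow {m i : ℕ} (h : m < i) : PowerSeries.coeff (R := ℚ) m (gB ^ i) = 0 := by
  have hdvd : (PowerSeries.X : PowerSeries ℚ) ^ i ∣ gB ^ i :=
    pow_dvd_pow_of_dvd (PowerSeries.X_dvd_iff.mpr constantCoeff_gB) i
  exact PowerSeries.X_pow_dvd_iff.mp hdvd m h

lemma coeff_exp_gB_pow {m i : ℕ} (h : m < i) :
    PowerSeries.coeff (R := ℚ) m (PowerSeries.exp ℚ * gB ^ i) = 0 := by
  have hdvd : (PowerSeries.X : PowerSeries ℚ) ^ i ∣ PowerSeries.exp ℚ * gB ^ i :=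
    Dvd.dvd.mul_left (pow_dvd_pow_of_dvd (PowerSeries.X_dvd_iff.mpr constantCoeff_gB) i) _
  exact PowerSeries.X_pow_dvd_iff.mp hdvd m h

lemma deriv_fB : PowerSeries.derivative ℚ fB = PowerSeries.exp ℚ * fB := by
  ext n
  rw [PowerSeries.coeff_derivative, PowerSeries.coeff_mul,
    Finset.Nat.sum_antidiagonal_eq_sum_range_succ_mk]
  simp only [PowerSeries.coeff_exp, coeff_fB, Algebra.algebraMap_self, RingHom.id_apply]
  rw [← Finset.sum_range_reflect]
  have key : (bellNum (n+1) : ℚ) = ∑ j ∈ Finset.range (n+1), (n.choose j : ℚ) * bellNum j := by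
    rw [bellNum_succ]; push_cast; ring
  rw [key, Nat.factorial_succ, Finset.sum_div, Finset.sum_mul]
  apply Finset.sum_congr rfl
  intro j hj
  rw [Finset.mem_range] at hj
  have hj' : j ≤ n := by omega
  have h1 : n + 1 - 1 - j = n - j := by omega
  have h2 : n - (n - j) = j := by omega
  rw [h1, h2]
  have hcf : ((n.choose j : ℚ)) * j.factorial * (n - j).factorial = n.factorial := by
    exact_mod_cast congrArg (Nat.cast (R := ℚ)) (Nat.choose_mul_factorial_mul_factorial hj')
  have f1 : (j.factorial : ℚ) ≠ 0 := Nat.cast_ne_zero.mpr j.factorial_ne_zero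
  have f2 : ((n - j).factorial : ℚ) ≠ 0 := Nat.cast_ne_zero.mpr (n - j).factorial_ne_zero
  have f3 : (n.factorial : ℚ) ≠ 0 := Nat.cast_ne_zero.mpr n.factorial_ne_zero
  field_simp
  linear_combination (norm := (push_cast; ring)) ((bellNum j : ℚ) * (n + 1)) * hcf

noncomputable def bp (n i : ℕ) : ℚ := bellPartial (fun m => (bellNum m : ℚ)) n i

noncomputable def qq (n j : ℕ) : ℚ :=
  ((n.factorial : ℚ) / (j.factorial : ℚ)) * PowerSeries.coeff (R := ℚ) n (PowerSeries.exp ℚ * gB ^ j)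

lemma bp_def (n i : ℕ) :
    bp n i = ((n.factorial : ℚ) / (i.factorial : ℚ)) * PowerSeries.coeff (R := ℚ) n (gB ^ i) := by
  rw [bp, bellPartial, smul_eq_mul]
  rfl

lemma bp_eq_zero {n i : ℕ} (h : n < i) : bp n i = 0 := by
  rw [bp_def, coeff_gB_pow h, mul_zero]

lemma qq_eq_zero {n j : ℕ} (h : n < j) : qq n j = 0 := by
  rw [qq, coeff_exp_gB_pow h, mul_zero]

lemma coeff_gB_pow_succ (n i : ℕ) :
    PowerSeries.coeff (R := ℚ) (n+1) (gB ^ (i+1)) * (n+1) =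
      (i+1) * (PowerSeries.coeff (R := ℚ) n (PowerSeries.exp ℚ * gB ^ i)
        + PowerSeries.coeff (R := ℚ) n (PowerSeries.exp ℚ * gB ^ (i+1))) := by
  have hfg : fB = 1 + gB := by rw [gB]; ring
  have hd : PowerSeries.derivative ℚ gB = PowerSeries.exp ℚ * (1 + gB) := by
    rw [gB, map_sub, Derivation.map_one_eq_zero, sub_zero, deriv_fB, hfg]
    ring
  have h2 : PowerSeries.derivative ℚ (gB ^ (i+1)) =
      (i+1) • ((PowerSeries.exp ℚ * gB ^ i) + (PowerSeries.exp ℚ * gB ^ (i+1))) := by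
    rw [Derivation.leibniz_pow, hd, Nat.add_sub_cancel]
    have h4 : gB ^ i • (PowerSeries.exp ℚ * (1 + gB)) =
        PowerSeries.exp ℚ * gB ^ i + PowerSeries.exp ℚ * gB ^ (i+1) := by
      rw [smul_eq_mul]; ring
    rw [h4]
  have h3 := congrArg (PowerSeries.coeff (R := ℚ) n) h2
  rw [PowerSeries.coeff_derivative, map_nsmul, nsmul_eq_mul, map_add] at h3
  push_cast at h3 ⊢
  linear_combination h3

lemma bp_succ_succ (n i : ℕ) : bp (n+1) (i+1) = qq n i + (i+1) * qq n (i+1) := by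
  rw [bp_def, qq, qq, Nat.factorial_succ (n), Nat.factorial_succ (i)]
  have f1 : (i.factorial : ℚ) ≠ 0 := Nat.cast_ne_zero.mpr i.factorial_ne_zero
  have hn1 : ((n:ℚ) + 1) ≠ 0 := by positivity
  have hi1 : ((i:ℚ) + 1) ≠ 0 := by positivity
  have key := coeff_gB_pow_succ n i
  set A := PowerSeries.coeff (R := ℚ) n (PowerSeries.exp ℚ * gB ^ i) with hA
  set B := PowerSeries.coeff (R := ℚ) n (PowerSeries.exp ℚ * gB ^ (i+1)) with hB
  have hc : PowerSeries.coeff (R := ℚ) (n+1) (gB ^ (i+1)) = ((i:ℚ)+1) * (A + B) / ((n:ℚ)+1) := by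
    rw [eq_div_iff hn1]
    linear_combination key
  rw [hc]
  push_cast
  field_simp

lemma bp_succ_zero (n : ℕ) : bp (n+1) 0 = 0 := by
  rw [bp_def, pow_zero, PowerSeries.coeff_one]
  simp

lemma qq_eq (n j : ℕ) :
    qq n j = ∑ m ∈ Finset.range (n+1), (n.choose m : ℚ) * bp m j := by
  rw [qq, PowerSeries.coeff_mul, Finset.Nat.sum_antidiagonal_eq_sum_range_succ_mk,
    ← Finset.sum_range_reflect, Finset.mul_sum]
  apply Finset.sum_congr rfl
  intro m hm
  rw [Finset.mem_range] at hm
  have hm' : m ≤ n := by omega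
  have h1 : n + 1 - 1 - m = n - m := by omega
  have h2 : n - (n - m) = m := by omega
  rw [h1, h2, PowerSeries.coeff_exp, bp_def]
  simp only [Algebra.algebraMap_self, RingHom.id_apply]
  have hcf : ((n.choose m : ℚ)) * m.factorial * (n - m).factorial = n.factorial := by
    exact_mod_cast congrArg (Nat.cast (R := ℚ)) (Nat.choose_mul_factorial_mul_factorial hm')
  have f1 : (m.factorial : ℚ) ≠ 0 := Nat.cast_ne_zero.mpr m.factorial_ne_zero
  have f2 : ((n - m).factorial : ℚ) ≠ 0 := Nat.cast_ne_zero.mpr (n - m).factorial_ne_zero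
  have f3 : (j.factorial : ℚ) ≠ 0 := Nat.cast_ne_zero.mpr j.factorial_ne_zero
  field_simp
  linear_combination (-(PowerSeries.coeff (R := ℚ) m (gB ^ j))) * hcf

noncomputable def TT (n : ℕ) : ℚ[X] :=
  ∑ k ∈ Finset.range (n+1), Polynomial.C (stirling2 n k : ℚ) * Polynomial.X ^ k

noncomputable def PP (n : ℕ) : ℚ[X] :=
  ∑ i ∈ Finset.range (n+1), descPochhammer ℚ i * Polynomial.C (bp n i)

lemma TT_trunc {j N : ℕ} (h : j ≤ N) :
    ∑ k ∈ Finset.range (N+1), Polynomial.C (stirling2 j k : ℚ) * Polynomial.X ^ k = TT j := by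
  rw [TT]
  symm
  apply Finset.sum_subset
  · intro x hx; rw [Finset.mem_range] at *; omega
  · intro x _ hx
    rw [Finset.mem_range, not_lt] at hx
    rw [stirling2_eq_zero (by omega), Nat.cast_zero, map_zero, zero_mul]

lemma PP_trunc {j N : ℕ} (h : j ≤ N) :
    ∑ i ∈ Finset.range (N+1), descPochhammer ℚ i * Polynomial.C (bp j i) = PP j := by
  rw [PP]
  symm
  apply Finset.sum_subset
  · intro x hx; rw [Finset.mem_range] at *; omega
  · intro x _ hx
    rw [Finset.mem_range, not_lt] at hx
    rw [bp_eq_zero (by omega), map_zero, mul_zero]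

lemma TT_succ (n : ℕ) :
    TT (n+1) = Polynomial.X * ∑ m ∈ Finset.range (n+1),
      Polynomial.C ((n.choose m : ℚ)) * TT m := by
  have hR : ∑ m ∈ Finset.range (n+1), Polynomial.C ((n.choose m : ℚ)) * TT m
      = ∑ m ∈ Finset.range (n+1), Polynomial.C ((n.choose m : ℚ)) *
          ∑ k ∈ Finset.range (n+1), Polynomial.C (stirling2 m k : ℚ) * Polynomial.X ^ k :=
    Finset.sum_congr rfl fun m hm => by
      rw [TT_trunc (Nat.lt_succ_iff.mp (Finset.mem_range.mp hm))]
  rw [TT, Finset.sum_range_succ'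
    (fun k => Polynomial.C (stirling2 (n+1) k : ℚ) * Polynomial.X ^ k)]
  rw [show ((stirling2 (n+1) 0 : ℚ)) = 0 by norm_num [show stirling2 (n+1) 0 = 0 from rfl]]
  rw [map_zero, zero_mul, add_zero]
  have hL : ∀ k ∈ Finset.range (n+1),
      Polynomial.C ((stirling2 (n+1) (k+1) : ℚ)) * Polynomial.X ^ (k+1)
      = ∑ j ∈ Finset.range (n+1), Polynomial.X *
          (Polynomial.C ((n.choose j : ℚ)) * (Polynomial.C ((stirling2 j k : ℚ))
            * Polynomial.X ^ k)) := by
    intro k _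
    rw [stirling2_succ_succ n k]
    push_cast
    rw [map_sum, Finset.sum_mul]
    apply Finset.sum_congr rfl
    intro j _
    rw [map_mul, pow_succ]
    ring
  rw [Finset.sum_congr rfl hL, Finset.sum_comm, hR, Finset.mul_sum]
  apply Finset.sum_congr rfl
  intro m _
  rw [Finset.mul_sum, Finset.mul_sum]

lemma PP_succ (n : ℕ) :
    PP (n+1) = Polynomial.X * ∑ m ∈ Finset.range (n+1),
      Polynomial.C ((n.choose m : ℚ)) * PP m := by
  rw [PP, Finset.sum_range_succ'
    (fun i => descPochhammer ℚ i * Polynomial.C (bp (n+1) i))]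
  rw [bp_succ_zero, map_zero, mul_zero, add_zero]
  have hterm : ∀ j ∈ Finset.range (n+1),
      descPochhammer ℚ (j+1) * Polynomial.C (bp (n+1) (j+1))
      = descPochhammer ℚ (j+1) * Polynomial.C (qq n j)
        + (((j:ℚ[X])+1) * descPochhammer ℚ (j+1) * Polynomial.C (qq n (j+1))) := by
    intro j _
    rw [bp_succ_succ, map_add, map_mul]
    have : Polynomial.C ((j:ℚ)+1) = ((j:ℚ[X])+1) := by simp
    rw [this]
    ring
  rw [Finset.sum_congr rfl hterm, Finset.sum_add_distrib]
  have h2 : ∑ j ∈ Finset.range (n+1),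
        ((j:ℚ[X])+1) * descPochhammer ℚ (j+1) * Polynomial.C (qq n (j+1))
      = ∑ i ∈ Finset.range (n+1), (i:ℚ[X]) * descPochhammer ℚ i * Polynomial.C (qq n i) := by
    have h5 := Finset.sum_range_succ'
      (fun i => (i:ℚ[X]) * descPochhammer ℚ i * Polynomial.C (qq n i)) (n+1)
    rw [Finset.sum_range_succ
      (fun i => (i:ℚ[X]) * descPochhammer ℚ i * Polynomial.C (qq n i)) (n+1)] at h5
    rw [qq_eq_zero (by omega), map_zero, mul_zero, add_zero] at h5
    rw [Nat.cast_zero, zero_mul, zero_mul, add_zero] at h5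
    rw [h5]
    apply Finset.sum_congr rfl
    intro j _
    push_cast
    ring
  rw [h2, ← Finset.sum_add_distrib]
  have h3 : ∀ j ∈ Finset.range (n+1),
      (descPochhammer ℚ (j+1) * Polynomial.C (qq n j)
        + (j:ℚ[X]) * descPochhammer ℚ j * Polynomial.C (qq n j))
      = Polynomial.X * (descPochhammer ℚ j * Polynomial.C (qq n j)) := by
    intro j _
    rw [descPochhammer_succ_right]
    ring
  rw [Finset.sum_congr rfl h3, ← Finset.mul_sum]
  congr 1
  have h4 : ∀ j ∈ Finset.range (n+1), descPochhammer ℚ j * Polynomial.C (qq n j)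
      = ∑ m ∈ Finset.range (n+1), Polynomial.C ((n.choose m : ℚ)) *
          (descPochhammer ℚ j * Polynomial.C (bp m j)) := by
    intro j _
    rw [qq_eq, map_sum, Finset.mul_sum]
    apply Finset.sum_congr rfl
    intro m _
    rw [map_mul]
    ring
  rw [Finset.sum_congr rfl h4, Finset.sum_comm]
  apply Finset.sum_congr rfl
  intro m hm
  rw [← Finset.mul_sum, PP_trunc (Nat.lt_succ_iff.mp (Finset.mem_range.mp hm))]

lemma TT_eq_PP : ∀ n, TT n = PP n := by
  intro n
  induction n using Nat.strong_induction_on with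
  | _ n ih =>
    match n with
    | 0 =>
      rw [TT, PP]
      simp [bp_def, show stirling2 0 0 = 1 from rfl]
    | (n+1) =>
      rw [TT_succ, PP_succ]
      congr 1
      apply Finset.sum_congr rfl
      intro m hm
      rw [ih m (by rw [Finset.mem_range] at hm; omega)]


/-- The exponential polynomials equal the moments of `x.β` (the Bell polynomial umbra):
`Σ_k S(n,k) x^k = Σ_i (x)_i · B_{n,i}(B_1, B_2, …)`, where `B_{n,i}` are the partial
Bell polynomials of the Bell-number sequence. -/
theorem exponential_poly_eq_bell_moments (n : ℕ) :
    ∑ k ∈ Finset.range (n + 1), Polynomial.C (stirling2 n k : ℚ) * Polynomial.X ^ k =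
      ∑ i ∈ Finset.range (n + 1),
        descPochhammer ℚ i * Polynomial.C (bellPartial (fun m => (bellNum m : ℚ)) n i) := by
  exact TT_eq_PP n
end

section
/- Let K be a field of characteristic zero and let (p_k)_{k≥0} be a sequence of polynomials in K[x] with p_0 = 1 and deg p_k = k for every k ≥ 1. Then (p_k) is of binomial type, i.e., p_k(x+y) = Σ_{i=0}^k C(k,i) p_i(x) p_{k−i}(y) for all k, if and only if there exists a sequence a : ℕ → K with a_0 = 1 such that p_k(x) = Σ_{i=0}^k (x)_i · B_{k,i} for all k, where B_{k,i} are the partial Bell polynomials of the sequence a and (x)_i is the falling factorial. Moreover, such a sequence (a_n)_{n≥1} is uniquely determined by (p_k). -/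
open Finset Polynomial

section Aux

set_option linter.unusedSectionVars false

/-- Vandermonde identity for the falling factorial. -/
theorem descPochhammer_eval_add' {R : Type*} [CommRing R] (x y : R) (n : ℕ) :
    (descPochhammer R n).eval (x + y) =
    ∑ s ∈ Finset.range (n+1), (n.choose s : R) *
      ((descPochhammer R s).eval x * (descPochhammer R (n - s)).eval y) := by
  induction n with
  | zero => simp
  | succ n ih =>
    rw [descPochhammer_succ_eval, ih, Finset.sum_mul]
    have key : ∀ s ∈ Finset.range (n+1), (n.choose s : R) *
        ((descPochhammer R s).eval x * (descPochhammer R (n - s)).eval y) * (x + y - n)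
        = (n.choose s : R) * ((descPochhammer R (s+1)).eval x * (descPochhammer R (n-s)).eval y)
          + (n.choose s : R) * ((descPochhammer R s).eval x * (descPochhammer R (n-s+1)).eval y) := by
      intro s hs
      rw [Finset.mem_range, Nat.lt_succ_iff] at hs
      rw [descPochhammer_succ_eval, descPochhammer_succ_eval]
      have hc : ((n - s : ℕ) : R) = (n : R) - (s : R) := by
        rw [Nat.cast_sub hs]
      rw [hc]
      ring
    rw [Finset.sum_congr rfl key, Finset.sum_add_distrib]
    -- now RHS target: ∑_{s ∈ range (n+2)} C(n+1,s) dP s x * dP (n+1-s) y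
    rw [Finset.sum_range_succ' _ (n+1)]
    have h1 : ∀ s ∈ Finset.range (n+1), ((n+1).choose (s+1) : R) *
        ((descPochhammer R (s+1)).eval x * (descPochhammer R (n+1-(s+1))).eval y)
        = (n.choose s : R) * ((descPochhammer R (s+1)).eval x * (descPochhammer R (n-s)).eval y)
          + (n.choose (s+1) : R) * ((descPochhammer R (s+1)).eval x * (descPochhammer R (n-s)).eval y) := by
      intro s _
      rw [Nat.choose_succ_succ, Nat.succ_sub_succ]
      push_cast
      ring
    rw [Finset.sum_congr rfl h1, Finset.sum_add_distrib]
    have h2 : ∑ s ∈ Finset.range (n+1), (n.choose (s+1) : R) *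
          ((descPochhammer R (s+1)).eval x * (descPochhammer R (n-s)).eval y)
        + ((n+1).choose 0 : R) * ((descPochhammer R 0).eval x * (descPochhammer R (n+1-0)).eval y)
        = ∑ s ∈ Finset.range (n+1), (n.choose s : R) *
          ((descPochhammer R s).eval x * (descPochhammer R (n-s+1)).eval y) := by
      rw [Finset.sum_range_succ, Nat.choose_succ_self,
        Finset.sum_range_succ' (fun s => (n.choose s : R) *
          ((descPochhammer R s).eval x * (descPochhammer R (n-s+1)).eval y)) n]
      simp only [Nat.cast_zero, zero_mul, add_zero]
      congr 1
      · apply Finset.sum_congr rfl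
        intro s hs
        rw [Finset.mem_range] at hs
        have : n - s = n - (s+1) + 1 := by omega
        rw [this]
      · simp only [Nat.choose_zero_right, Nat.cast_one, Nat.sub_zero, one_mul]
    rw [add_comm (∑ s ∈ Finset.range (n+1), (n.choose s : R) *
          ((descPochhammer R (s+1)).eval x * (descPochhammer R (n-s)).eval y)) _, add_assoc, h2, add_comm]

lemma sum_triangle {M : Type*} [AddCommMonoid M] (n : ℕ) (F : ℕ → ℕ → M) :
    ∑ s ∈ Finset.range (n+1), ∑ u ∈ Finset.range (n+1-s), F s u
    = ∑ i ∈ Finset.range (n+1), ∑ s ∈ Finset.range (i+1), F s (i-s) := by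
  rw [Finset.sum_sigma', Finset.sum_sigma']
  refine Finset.sum_nbij' (i := fun p => ⟨p.1 + p.2, p.1⟩) (j := fun p => ⟨p.2, p.1 - p.2⟩)
    ?_ ?_ ?_ ?_ ?_
  · rintro ⟨s, u⟩ h
    simp only [Finset.mem_sigma, Finset.mem_range] at h ⊢
    omega
  · rintro ⟨i, s⟩ h
    simp only [Finset.mem_sigma, Finset.mem_range] at h ⊢
    omega
  · rintro ⟨s, u⟩ h
    simp
  · rintro ⟨i, s⟩ h
    simp only [Finset.mem_sigma, Finset.mem_range] at h
    show (⟨s + (i - s), s⟩ : (_ : ℕ) × ℕ) = ⟨i, s⟩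
    have : s + (i - s) = i := by omega
    rw [this]
  · rintro ⟨s, u⟩ h
    simp

variable {K : Type*} [Field K] [CharZero K]

lemma rat_smul_eq (q : ℚ) (x : K) : q • x = (q : K) * x := by
  rw [Algebra.smul_def, eq_ratCast]

lemma bell_eq_zero (a : ℕ → K) (ha : a 0 = 1) {n k : ℕ} (h : n < k) :
    bellPartial a n k = 0 := by
  have hX : (PowerSeries.X : PowerSeries K) ∣ (egf a - 1) := by
    rw [PowerSeries.X_dvd_iff]
    simp [egf, ha]
  have hd : (PowerSeries.X : PowerSeries K) ^ k ∣ (egf a - 1) ^ k := pow_dvd_pow_of_dvd hX k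
  rw [PowerSeries.X_pow_dvd_iff] at hd
  rw [bellPartial, hd n h, smul_zero]

lemma bell_zero_zero (a : ℕ → K) : bellPartial a 0 0 = 1 := by
  simp [bellPartial]

lemma bell_n_zero (a : ℕ → K) {n : ℕ} (h : 1 ≤ n) : bellPartial a n 0 = 0 := by
  have hn : n ≠ 0 := by omega
  simp [bellPartial, PowerSeries.coeff_one, hn]

lemma bell_n_one (a : ℕ → K) {n : ℕ} (h : 1 ≤ n) : bellPartial a n 1 = a n := by
  have hn : n ≠ 0 := by omega
  simp [bellPartial, egf, PowerSeries.coeff_one, hn, smul_smul]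
  rw [mul_inv_cancel₀ (by exact_mod_cast Nat.factorial_ne_zero n), one_smul]

lemma bell_conv (a : ℕ → K) (s u k : ℕ) :
    ∑ j ∈ Finset.range (k+1), (k.choose j : K) *
      (bellPartial a j s * bellPartial a (k-j) u)
    = ((s+u).choose s : K) * bellPartial a k (s+u) := by
  have hc : (PowerSeries.coeff (R := K) k ((egf a - 1) ^ (s+u)))
      = ∑ j ∈ Finset.range (k+1), PowerSeries.coeff (R := K) j ((egf a - 1)^s) *
          PowerSeries.coeff (R := K) (k-j) ((egf a - 1)^u) := by
    rw [pow_add, PowerSeries.coeff_mul, Finset.Nat.sum_antidiagonal_eq_sum_range_succ_mk]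
  simp only [bellPartial, rat_smul_eq, hc, Finset.mul_sum]
  apply Finset.sum_congr rfl
  intro j hj
  rw [Finset.mem_range, Nat.lt_succ_iff] at hj
  have key : (k.choose j : ℚ) * ((j.factorial : ℚ)/(s.factorial : ℚ)) *
      ((k-j).factorial / (u.factorial : ℚ))
      = ((s+u).choose s : ℚ) * ((k.factorial : ℚ)/((s+u).factorial : ℚ)) := by
    have h1 : k.choose j * j.factorial * (k-j).factorial = k.factorial :=
      Nat.choose_mul_factorial_mul_factorial hj
    have h2 : (s+u).choose s * s.factorial * u.factorial = (s+u).factorial :=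
      by simpa using Nat.choose_mul_factorial_mul_factorial (Nat.le_add_right s u)
    field_simp
    push_cast [← h1, ← h2]
    ring
  calc (k.choose j : K) * ((((j.factorial : ℚ)/(s.factorial : ℚ) : ℚ) : K) *
        PowerSeries.coeff (R := K) j ((egf a - 1)^s) *
        (((((k-j).factorial : ℚ)/(u.factorial : ℚ) : ℚ) : K) *
        PowerSeries.coeff (R := K) (k-j) ((egf a - 1)^u)))
      = (((k.choose j : ℚ) * ((j.factorial : ℚ)/(s.factorial : ℚ)) *
          (((k-j).factorial : ℚ) / (u.factorial : ℚ)) : ℚ) : K) *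
        (PowerSeries.coeff (R := K) j ((egf a - 1)^s) *
         PowerSeries.coeff (R := K) (k-j) ((egf a - 1)^u)) := by push_cast; ring
    _ = ((s+u).choose s : K) * ((((k.factorial : ℚ)/((s+u).factorial : ℚ) : ℚ) : K) *
        (PowerSeries.coeff (R := K) j ((egf a - 1)^s) *
         PowerSeries.coeff (R := K) (k-j) ((egf a - 1)^u))) := by rw [key]; push_cast; ring

lemma lemmaA (a : ℕ → K) (ha : a 0 = 1) {R : Type*} [CommRing R] [Algebra K R]
    (x y : R) (k : ℕ) :
    ∑ i ∈ Finset.range (k+1), (descPochhammer R i).eval (x+y) *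
        algebraMap K R (bellPartial a k i)
    = ∑ j ∈ Finset.range (k+1), (k.choose j : R) *
        ((∑ s ∈ Finset.range (j+1), (descPochhammer R s).eval x *
            algebraMap K R (bellPartial a j s)) *
         (∑ u ∈ Finset.range (k-j+1), (descPochhammer R u).eval y *
            algebraMap K R (bellPartial a (k-j) u))) := by
  -- extend the inner sums to range (k+1)
  have hext : ∀ j ∈ Finset.range (k+1),
      (k.choose j : R) *
        ((∑ s ∈ Finset.range (j+1), (descPochhammer R s).eval x *
            algebraMap K R (bellPartial a j s)) *
         (∑ u ∈ Finset.range (k-j+1), (descPochhammer R u).eval y *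
            algebraMap K R (bellPartial a (k-j) u)))
      = (k.choose j : R) *
        ((∑ s ∈ Finset.range (k+1), (descPochhammer R s).eval x *
            algebraMap K R (bellPartial a j s)) *
         (∑ u ∈ Finset.range (k+1), (descPochhammer R u).eval y *
            algebraMap K R (bellPartial a (k-j) u))) := by
    intro j hj
    rw [Finset.mem_range, Nat.lt_succ_iff] at hj
    congr 2
    · apply Finset.sum_subset
      · intro t ht; rw [Finset.mem_range] at ht ⊢; omega
      · intro t _ ht
        rw [Finset.mem_range, Nat.lt_succ_iff, not_le] at ht
        rw [bell_eq_zero a ha ht, map_zero, mul_zero]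
    · apply Finset.sum_subset
      · intro t ht; rw [Finset.mem_range] at ht ⊢; omega
      · intro t _ ht
        rw [Finset.mem_range, Nat.lt_succ_iff, not_le] at ht
        rw [bell_eq_zero a ha ht, map_zero, mul_zero]
  rw [Finset.sum_congr rfl hext]
  -- expand products and swap sums
  have hexp : ∀ j ∈ Finset.range (k+1),
      (k.choose j : R) *
        ((∑ s ∈ Finset.range (k+1), (descPochhammer R s).eval x *
            algebraMap K R (bellPartial a j s)) *
         (∑ u ∈ Finset.range (k+1), (descPochhammer R u).eval y *
            algebraMap K R (bellPartial a (k-j) u)))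
      = ∑ s ∈ Finset.range (k+1), ∑ u ∈ Finset.range (k+1), (k.choose j : R) *
          ((descPochhammer R s).eval x * algebraMap K R (bellPartial a j s) *
           ((descPochhammer R u).eval y * algebraMap K R (bellPartial a (k-j) u))) := by
    intro j _
    rw [Finset.sum_mul_sum, Finset.mul_sum]
    exact Finset.sum_congr rfl fun s _ => Finset.mul_sum _ _ _
  rw [Finset.sum_congr rfl hexp, Finset.sum_comm]
  rw [Finset.sum_congr rfl (fun s (_ : s ∈ Finset.range (k+1)) => Finset.sum_comm)]
  have hinner : ∀ s ∈ Finset.range (k+1), ∀ u ∈ Finset.range (k+1),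
      ∑ j ∈ Finset.range (k+1), (k.choose j : R) *
        ((descPochhammer R s).eval x * algebraMap K R (bellPartial a j s) *
         ((descPochhammer R u).eval y * algebraMap K R (bellPartial a (k-j) u)))
      = (descPochhammer R s).eval x * (descPochhammer R u).eval y *
          (((s+u).choose s : R) * algebraMap K R (bellPartial a k (s+u))) := by
    intro s _ u _
    have := congrArg (algebraMap K R) (bell_conv a s u k)
    rw [map_sum, map_mul] at this
    calc ∑ j ∈ Finset.range (k+1), (k.choose j : R) *
        ((descPochhammer R s).eval x * algebraMap K R (bellPartial a j s) *
         ((descPochhammer R u).eval y * algebraMap K R (bellPartial a (k-j) u)))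
        = (descPochhammer R s).eval x * (descPochhammer R u).eval y *
          ∑ j ∈ Finset.range (k+1), algebraMap K R ((k.choose j : K) *
            (bellPartial a j s * bellPartial a (k-j) u)) := by
          rw [Finset.mul_sum]
          apply Finset.sum_congr rfl
          intro j _
          rw [map_mul, map_mul, map_natCast]
          ring
      _ = (descPochhammer R s).eval x * (descPochhammer R u).eval y *
          (((s+u).choose s : R) * algebraMap K R (bellPartial a k (s+u))) := by
          rw [this, map_natCast]
  rw [Finset.sum_congr rfl (fun s hs => Finset.sum_congr rfl (fun u hu => hinner s hs u hu))]
  -- restrict to the triangle s + u ≤ k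
  have htri : ∀ s ∈ Finset.range (k+1),
      ∑ u ∈ Finset.range (k+1), (descPochhammer R s).eval x * (descPochhammer R u).eval y *
          (((s+u).choose s : R) * algebraMap K R (bellPartial a k (s+u)))
      = ∑ u ∈ Finset.range (k+1-s), (descPochhammer R s).eval x * (descPochhammer R u).eval y *
          (((s+u).choose s : R) * algebraMap K R (bellPartial a k (s+u))) := by
    intro s hs
    rw [Finset.mem_range, Nat.lt_succ_iff] at hs
    symm
    apply Finset.sum_subset
    · intro t ht; rw [Finset.mem_range] at ht ⊢; omega
    · intro t _ ht
      rw [Finset.mem_range, not_lt] at ht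
      rw [bell_eq_zero a ha (by omega : k < s + t), map_zero, mul_zero, mul_zero]
  rw [Finset.sum_congr rfl htri, sum_triangle k (fun s u =>
      (descPochhammer R s).eval x * (descPochhammer R u).eval y *
        (((s+u).choose s : R) * algebraMap K R (bellPartial a k (s+u))))]
  -- use Vandermonde on the left
  apply Finset.sum_congr rfl
  intro i hi
  rw [descPochhammer_eval_add', Finset.sum_mul]
  apply Finset.sum_congr rfl
  intro s hs
  rw [Finset.mem_range, Nat.lt_succ_iff] at hs
  have : s + (i - s) = i := by omega
  rw [this]
  ring

noncomputable def Pseq (a : ℕ → K) (k : ℕ) : Polynomial K :=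
  ∑ i ∈ Finset.range (k+1), descPochhammer K i * Polynomial.C (bellPartial a k i)

lemma aeval_Pseq {R : Type*} [CommRing R] [Algebra K R] (a : ℕ → K) (t : R) (k : ℕ) :
    Polynomial.aeval t (Pseq a k)
    = ∑ i ∈ Finset.range (k+1), (descPochhammer R i).eval t *
        algebraMap K R (bellPartial a k i) := by
  rw [Pseq, map_sum]
  apply Finset.sum_congr rfl
  intro i _
  rw [map_mul, aeval_C, aeval_def, eval₂_eq_eval_map, descPochhammer_map]

lemma eval_one_descPochhammer (i : ℕ) :
    (descPochhammer K i).eval 1 = if i ≤ 1 then 1 else 0 := by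
  have : ((1 : ℕ) : K) = 1 := Nat.cast_one
  rw [← this, descPochhammer_eval_eq_descFactorial]
  match i with
  | 0 => simp
  | 1 => simp
  | (n+2) =>
    have : (1 : ℕ).descFactorial (n+2) = 0 := by
      rw [Nat.descFactorial_succ]; simp
    simp [this]

lemma eval_one_Pseq (a : ℕ → K) (k : ℕ) :
    (Pseq a k).eval 1 = if k = 0 then 1 else a k := by
  rw [Pseq, Polynomial.eval_finset_sum]
  simp only [Polynomial.eval_mul, Polynomial.eval_C, eval_one_descPochhammer]
  rcases Nat.eq_zero_or_pos k with hk | hk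
  · subst hk; simp [bell_zero_zero]
  · have hk' : k ≠ 0 := by omega
    rw [if_neg hk']
    rw [Finset.sum_eq_add_of_mem 0 1 (by simp) (by simp; omega) (by omega) ?_]
    · simp [bell_n_zero a hk, bell_n_one a hk]
    · intro i hi hne
      rcases Nat.lt_or_ge i 2 with h2 | h2
      · interval_cases i <;> simp_all
      · rw [if_neg (by omega), zero_mul]

lemma binType (a : ℕ → K) (ha : a 0 = 1) (k : ℕ) :
    Polynomial.aeval
        (Polynomial.C Polynomial.X + Polynomial.X : Polynomial (Polynomial K)) (Pseq a k) =
      ∑ i ∈ Finset.range (k + 1), (k.choose i : Polynomial (Polynomial K)) *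
        (Polynomial.aeval (Polynomial.C Polynomial.X : Polynomial (Polynomial K)) (Pseq a i) *
          Polynomial.aeval (Polynomial.X : Polynomial (Polynomial K)) (Pseq a (k - i))) := by
  rw [aeval_Pseq]
  rw [lemmaA a ha (R := Polynomial (Polynomial K)) (Polynomial.C Polynomial.X) Polynomial.X k]
  apply Finset.sum_congr rfl
  intro j _
  rw [aeval_Pseq, aeval_Pseq]

lemma shift_Pseq (a : ℕ → K) (ha : a 0 = 1) (k : ℕ) :
    Polynomial.aeval ((Polynomial.X : Polynomial K) + 1) (Pseq a k)
    = ∑ j ∈ Finset.range (k+1), (k.choose j : Polynomial K) *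
        (Pseq a j * Polynomial.C ((Pseq a (k-j)).eval 1)) := by
  rw [aeval_Pseq, lemmaA a ha (Polynomial.X : Polynomial K) 1 k]
  apply Finset.sum_congr rfl
  intro j _
  refine congrArg _ (congrArg₂ _ ?_ ?_)
  · rw [← aeval_Pseq, Polynomial.aeval_X_left_apply]
  · rw [← aeval_Pseq, aeval_def, Polynomial.eval₂_at_one, Polynomial.algebraMap_eq]

lemma const_of_shift (d : Polynomial K)
    (hd : Polynomial.aeval ((Polynomial.X : Polynomial K) + 1) d = d)
    (h1 : d.eval 1 = 0) : d = 0 := by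
  have hcomp : d.comp (Polynomial.X + 1) = d := by
    rw [Polynomial.comp_eq_aeval]; exact hd
  have hz : ∀ z : K, d.eval (z + 1) = d.eval z := by
    intro z
    conv_rhs => rw [← hcomp]
    rw [Polynomial.eval_comp]
    simp
  have hn : ∀ n : ℕ, d.eval ((n : K) + 1) = 0 := by
    intro n
    induction n with
    | zero => simpa using h1
    | succ m ih => rw [Nat.cast_succ, hz ((m : K) + 1)]; exact ih
  apply Polynomial.eq_zero_of_infinite_isRoot
  have hinj : Function.Injective (fun n : ℕ => (n : K) + 1) := by
    intro m n h
    simpa using h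
  exact Set.infinite_of_injective_forall_mem hinj (fun n => hn n)

lemma shift_p (p : ℕ → Polynomial K) (k : ℕ)
    (H : Polynomial.aeval
          (Polynomial.C Polynomial.X + Polynomial.X : Polynomial (Polynomial K)) (p k) =
        ∑ i ∈ Finset.range (k + 1), (k.choose i : Polynomial (Polynomial K)) *
          (Polynomial.aeval (Polynomial.C Polynomial.X : Polynomial (Polynomial K)) (p i) *
            Polynomial.aeval (Polynomial.X : Polynomial (Polynomial K)) (p (k - i)))) :
    Polynomial.aeval ((Polynomial.X : Polynomial K) + 1) (p k)
    = ∑ i ∈ Finset.range (k+1), (k.choose i : Polynomial K) *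
        (p i * Polynomial.C ((p (k-i)).eval 1)) := by
  let f : Polynomial (Polynomial K) →ₐ[K] Polynomial K :=
    (Polynomial.aeval (R := Polynomial K) (1 : Polynomial K)).restrictScalars K
  have hfCX : f (Polynomial.C Polynomial.X) = Polynomial.X := by
    simp [f]
  have hfX : f (Polynomial.X) = 1 := by
    simp [f]
  have hf := congrArg f H
  rw [← Polynomial.aeval_algHom_apply, map_add, hfCX, hfX] at hf
  rw [hf, map_sum]
  apply Finset.sum_congr rfl
  intro i _
  rw [map_mul, map_mul, map_natCast, ← Polynomial.aeval_algHom_apply,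
    ← Polynomial.aeval_algHom_apply, hfCX, hfX, Polynomial.aeval_X_left_apply,
    aeval_def, Polynomial.eval₂_at_one, Polynomial.algebraMap_eq]

end Aux

/-- A polynomial sequence `p_k` (with `p 0 = 1`, `deg p_k = k`) is of binomial type
iff it is umbrally represented as `p_k(x) = Σ_i (x)_i B_{k,i}(a)` for a (unique)
sequence `a` with `a 0 = 1`. -/
theorem binomial_type_iff_partition_umbra (K : Type*) [Field K] [CharZero K]
    (p : ℕ → Polynomial K) (hp0 : p 0 = 1)
    (hdeg : ∀ k : ℕ, 1 ≤ k → (p k).natDegree = k) :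
    (∀ k : ℕ,
      Polynomial.aeval
          (Polynomial.C Polynomial.X + Polynomial.X : Polynomial (Polynomial K)) (p k) =
        ∑ i ∈ Finset.range (k + 1), (k.choose i : Polynomial (Polynomial K)) *
          (Polynomial.aeval (Polynomial.C Polynomial.X : Polynomial (Polynomial K)) (p i) *
            Polynomial.aeval (Polynomial.X : Polynomial (Polynomial K)) (p (k - i)))) ↔
      (∃! a : ℕ → K, a 0 = 1 ∧ ∀ k : ℕ, p k = ∑ i ∈ Finset.range (k + 1),
        descPochhammer K i * Polynomial.C (bellPartial a k i)) := by
  constructor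
  · intro H
    set a : ℕ → K := fun k => if k = 0 then 1 else (p k).eval 1 with ha_def
    have ha : a 0 = 1 := by simp [ha_def]
    have hpq : ∀ k, p k = Pseq a k := by
      intro k
      induction k using Nat.strong_induction_on with
      | _ k ih =>
        match k with
        | 0 =>
          rw [hp0, Pseq]
          simp [bell_zero_zero]
        | (m+1) =>
          have hpe : ∀ j, (p j).eval 1 = if j = 0 then 1 else a j := by
            intro j
            rcases eq_or_ne j 0 with h|h
            · simp [h, hp0]
            · simp [h, ha_def]
          have hqe : ∀ j, (Pseq a j).eval 1 = if j = 0 then 1 else a j :=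
            fun j => eval_one_Pseq a j
          have h1 := shift_p p (m+1) (H (m+1))
          have h2 := shift_Pseq a ha (m+1)
          have hd : Polynomial.aeval ((Polynomial.X : Polynomial K) + 1)
              (p (m+1) - Pseq a (m+1)) = p (m+1) - Pseq a (m+1) := by
            rw [map_sub, h1, h2, ← Finset.sum_sub_distrib, Finset.sum_range_succ]
            have hz : ∑ i ∈ Finset.range (m+1),
                (((m+1).choose i : Polynomial K) * (p i * Polynomial.C ((p (m+1-i)).eval 1))
                - ((m+1).choose i : Polynomial K) *
                  (Pseq a i * Polynomial.C ((Pseq a (m+1-i)).eval 1))) = 0 := by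
              apply Finset.sum_eq_zero
              intro i hi
              rw [Finset.mem_range] at hi
              rw [ih i (by omega), hpe, hqe, sub_self]
            rw [hz, zero_add, Nat.choose_self, Nat.cast_one, one_mul, one_mul,
              Nat.sub_self, hpe 0, hqe 0]
            simp [sub_mul]
          have he : (p (m+1) - Pseq a (m+1)).eval 1 = 0 := by
            rw [Polynomial.eval_sub, hpe, hqe, sub_self]
          have := const_of_shift _ hd he
          exact sub_eq_zero.mp this
    refine ⟨a, ⟨ha, fun k => ?_⟩, ?_⟩
    · rw [hpq k]; rfl
    · rintro b ⟨hb0, hb⟩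
      funext j
      rcases eq_or_ne j 0 with h|h
      · rw [h, hb0, ha]
      · have hpb : p j = Pseq b j := by rw [hb j]; rfl
        have hbv : (p j).eval 1 = b j := by rw [hpb, eval_one_Pseq, if_neg h]
        simp only [ha_def, if_neg h]
        exact hbv.symm
  · rintro ⟨a, ⟨ha, hrep⟩, -⟩ k
    have hp' : ∀ j, p j = Pseq a j := fun j => by rw [hrep j]; rfl
    simp only [hp']
    exact binType a ha k
end
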